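/- Let P = [m]×[n] with m,n ≥ 2 and fix (a,b) ∈ P. Define f: J(P) → ℝ by f(I) = Σ_{(i,j) ≥ (a,b)} T^-_{(i,j)}(I) - Σ_{(i,j) : i > a, j > b} T^+_{(i,j)}(I), where T^-_{(i,j)}(I) = [(i,j) ∈ Max(I)] and T^+_{(i,j)}(I) = [(i,j) ∉ I and I ∪ {(i,j)} is an order ideal]. Then f(I) = 1_{(a,b)}(I) for every order ideal I, i.e., f(I) = 1 if (a,b) ∈ I and f(I) = 0 otherwise. -/

import Mathlib

open scoped Classical

/-- `T_p^-(I)`: indicator of `p ∈ Max I`. -/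
noncomputable def tm {α : Type*} [PartialOrder α] (I : Set α) (p : α) : ℝ :=
  if p ∈ I ∧ ∀ y ∈ I, p ≤ y → p = y then 1 else 0

/-- `T_p^+(I)`: indicator of `p ∉ I` with `I ∪ {p}` still an order ideal. -/
noncomputable def tp {α : Type*} [PartialOrder α] (I : Set α) (p : α) : ℝ :=
  if p ∉ I ∧ IsLowerSet (I ∪ {p}) then 1 else 0


lemma sum_ind {γ : Type*} (s : Finset γ) (C : γ → Prop) [DecidablePred C] (D : γ → ℝ)
    (h1 : ∀ x ∈ s, C x → D x = 1) (h0 : ∀ x ∈ s, ¬ C x → D x = 0) :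
    ∑ p ∈ s, D p = (s.filter C).card := by
  rw [← Finset.sum_filter_add_sum_filter_not s C D]
  have e1 : ∑ p ∈ s.filter C, D p = ((s.filter C).card : ℝ) := by
    rw [Finset.sum_congr rfl
      (fun x hx => h1 x (Finset.mem_filter.mp hx).1 (Finset.mem_filter.mp hx).2)]
    simp
  have e0 : ∑ p ∈ s.filter (fun x => ¬ C x), D p = 0 :=
    Finset.sum_eq_zero (fun x hx => h0 x (Finset.mem_filter.mp hx).1 (Finset.mem_filter.mp hx).2)
  rw [e1, e0, add_zero]

set_option maxHeartbeats 1000000 in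
lemma core_card (m n : ℕ) (a : Fin m) (b : Fin n)
    (I : Set (Fin m × Fin n)) (hI : IsLowerSet I) (hab : (a, b) ∈ I) :
    (Finset.univ.filter (fun p : Fin m × Fin n =>
        ((a, b) ≤ p) ∧ (p ∈ I ∧ ∀ y ∈ I, p ≤ y → p = y))).card
      = (Finset.univ.filter (fun p : Fin m × Fin n =>
        (a < p.1 ∧ b < p.2) ∧ (p ∉ I ∧ IsLowerSet (I ∪ {p})))).card + 1 := by
  classical
  set Mf := Finset.univ.filter (fun p : Fin m × Fin n =>
      ((a, b) ≤ p) ∧ (p ∈ I ∧ ∀ y ∈ I, p ≤ y → p = y)) with hMfdef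
  set Df := Finset.univ.filter (fun p : Fin m × Fin n =>
      (a < p.1 ∧ b < p.2) ∧ (p ∉ I ∧ IsLowerSet (I ∪ {p}))) with hDfdef
  set star : Fin m × Fin n → Prop := fun p => ∀ q ∈ I, p.1 < q.1 → ¬ (b ≤ q.2) with hstardef
  -- strict monotonicity of the linearization
  have hfs : ∀ x y : Fin m × Fin n, x ≤ y → x ≠ y →
      x.1.val * n + x.2.val < y.1.val * n + y.2.val := by
    intro x y hxy hne
    have h1 : x.1.val ≤ y.1.val := hxy.1
    have h2 : x.2.val ≤ y.2.val := hxy.2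
    rcases eq_or_lt_of_le h1 with he | hl
    · have h2' : x.2.val < y.2.val := by
        rcases eq_or_lt_of_le h2 with he2 | hl2
        · exact absurd (Prod.ext (Fin.ext he) (Fin.ext he2)) hne
        · exact hl2
      rw [he]
      omega
    · have hmul : (x.1.val + 1) * n ≤ y.1.val * n := Nat.mul_le_mul_right n hl
      have hx2 : x.2.val < n := x.2.isLt
      nlinarith
  -- the special maximal element
  obtain ⟨s₀, hs₀U, hs₀max⟩ := Finset.exists_max_image
      (Finset.univ.filter fun q : Fin m × Fin n => q ∈ I ∧ (a, b) ≤ q)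
      (fun q => q.1.val * n + q.2.val)
      ⟨(a, b), Finset.mem_filter.mpr ⟨Finset.mem_univ _, hab, le_refl _⟩⟩
  obtain ⟨-, hs₀I, hs₀ab⟩ := Finset.mem_filter.mp hs₀U
  have hs₀maxI : ∀ y ∈ I, s₀ ≤ y → s₀ = y := by
    intro y hy hle
    by_contra hne
    have hlt := hfs _ _ hle hne
    have hyU : y ∈ Finset.univ.filter fun q : Fin m × Fin n => q ∈ I ∧ (a, b) ≤ q :=
      Finset.mem_filter.mpr ⟨Finset.mem_univ _, hy, le_trans hs₀ab hle⟩
    exact absurd (hs₀max y hyU) (not_le.mpr hlt)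
  have hs₀M : s₀ ∈ Mf := Finset.mem_filter.mpr ⟨Finset.mem_univ _, hs₀ab, hs₀I, hs₀maxI⟩
  have hs₀star : star s₀ := by
    intro q hq hq1 hqb
    have hqU : q ∈ Finset.univ.filter fun q : Fin m × Fin n => q ∈ I ∧ (a, b) ≤ q := by
      refine Finset.mem_filter.mpr ⟨Finset.mem_univ _, hq, ?_, hqb⟩
      exact le_of_lt (lt_of_le_of_lt hs₀ab.1 hq1)
    have hle := hs₀max q hqU
    have hmul : (s₀.1.val + 1) * n ≤ q.1.val * n := Nat.mul_le_mul_right n hq1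
    have hx2 : s₀.2.val < n := s₀.2.isLt
    nlinarith
  -- the star part is exactly {s₀}
  have hMs : Mf.filter star = {s₀} := by
    apply Finset.eq_singleton_iff_unique_mem.mpr
    refine ⟨Finset.mem_filter.mpr ⟨hs₀M, hs₀star⟩, ?_⟩
    intro x hx
    obtain ⟨hxM, hxstar⟩ := Finset.mem_filter.mp hx
    obtain ⟨-, hxab, hxI, hxmax⟩ := Finset.mem_filter.mp hxM
    rcases lt_trichotomy x.1.val s₀.1.val with h | h | h
    · exact absurd hs₀ab.2 (hxstar s₀ hs₀I h)
    · -- same row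
      have h1 : x.1 = s₀.1 := Fin.ext h
      rcases le_total x.2 s₀.2 with h2 | h2
      · exact hxmax s₀ hs₀I ⟨le_of_eq h1, h2⟩
      · exact (hs₀maxI x hxI ⟨le_of_eq h1.symm, h2⟩).symm
    · exact absurd hxab.2 (hs₀star x hxI h)
  -- injectivity of row maps
  have hginj : Set.InjOn (fun p : Fin m × Fin n => p.1.val + 1) ↑(Mf.filter fun p => ¬ star p) := by
    intro p hp p' hp' hpp
    simp only [Finset.coe_filter, Set.mem_setOf_eq] at hp hp'
    obtain ⟨hpM, -⟩ := hp
    obtain ⟨hp'M, -⟩ := hp'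
    obtain ⟨-, -, hpI, hpmax⟩ := Finset.mem_filter.mp hpM
    obtain ⟨-, -, hp'I, hp'max⟩ := Finset.mem_filter.mp hp'M
    have h0 : p.1.val + 1 = p'.1.val + 1 := hpp
    have h1 : p.1 = p'.1 := Fin.ext (by omega)
    rcases le_total p.2 p'.2 with h2 | h2
    · exact hpmax p' hp'I ⟨le_of_eq h1, h2⟩
    · exact (hp'max p hpI ⟨le_of_eq h1.symm, h2⟩).symm
  have hhinj : Set.InjOn (fun p : Fin m × Fin n => p.1.val) ↑Df := by
    intro p hp p' hp' hpp
    simp only [Finset.coe_filter, Set.mem_setOf_eq, Finset.mem_univ, true_and, hDfdef,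
      Finset.coe_filter] at hp hp'
    obtain ⟨-, hpI, hplow⟩ := hp
    obtain ⟨-, hp'I, hp'low⟩ := hp'
    have h0 : p.1.val = p'.1.val := hpp
    have h1 : p.1 = p'.1 := Fin.ext h0
    rcases le_total p.2 p'.2 with h2 | h2
    · by_contra hne
      have : p ∈ I ∪ {p'} := hp'low (⟨le_of_eq h1, h2⟩ : p ≤ p') (Set.mem_union_right _ rfl)
      rcases this with h | h
      · exact hpI h
      · exact hne h
    · by_contra hne
      have : p' ∈ I ∪ {p} := hplow (⟨le_of_eq h1.symm, h2⟩ : p' ≤ p) (Set.mem_union_right _ rfl)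
      rcases this with h | h
      · exact hp'I h
      · exact hne h.symm
  -- image equality
  have hImg : (Mf.filter fun p => ¬ star p).image (fun p => p.1.val + 1)
      = Df.image (fun p => p.1.val) := by
    ext k
    simp only [Finset.mem_image]
    constructor
    · rintro ⟨p, hpMg, hpk⟩
      obtain ⟨hpM, hpnstar⟩ := Finset.mem_filter.mp hpMg
      obtain ⟨-, hpab, hpI, hpmax⟩ := Finset.mem_filter.mp hpM
      have hpn : ¬ ∀ q ∈ I, p.1 < q.1 → ¬ (b ≤ q.2) := hpnstar
      push_neg at hpn
      obtain ⟨q, hqI, hq1, hqb⟩ := hpn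
      have hk'lt : p.1.val + 1 < m := by
        have := q.1.isLt
        have : p.1.val < q.1.val := hq1
        omega
      set k' : Fin m := ⟨p.1.val + 1, hk'lt⟩ with hk'def
      have hbrow : ((k', b) : Fin m × Fin n) ∈ I := by
        refine hI (⟨?_, hqb⟩ : ((k', b) : Fin m × Fin n) ≤ q) hqI
        show k'.val ≤ q.1.val
        have : p.1.val < q.1.val := hq1
        simp only [hk'def]
        omega
      have hptop : ((k', p.2) : Fin m × Fin n) ∉ I := by
        intro h
        have heq := hpmax (k', p.2) h ⟨by show p.1.val ≤ k'.val; simp [hk'def], le_refl _⟩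
        have : p.1.val = k'.val := congrArg (fun z : Fin m × Fin n => z.1.val) heq
        simp [hk'def] at this
      set Sc := Finset.univ.filter (fun j : Fin n => ((k', j) : Fin m × Fin n) ∉ I) with hScdef
      have hScne : Sc.Nonempty := ⟨p.2, Finset.mem_filter.mpr ⟨Finset.mem_univ _, hptop⟩⟩
      set c := Sc.min' hScne with hcdef
      have hcI : ((k', c) : Fin m × Fin n) ∉ I :=
        (Finset.mem_filter.mp (Sc.min'_mem hScne)).2
      have hcmin : ∀ j : Fin n, j < c → ((k', j) : Fin m × Fin n) ∈ I := by
        intro j hj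
        by_contra h
        have : c ≤ j := Sc.min'_le j (Finset.mem_filter.mpr ⟨Finset.mem_univ _, h⟩)
        exact absurd hj (not_lt.mpr this)
      have hbc : b < c := by
        by_contra h
        push_neg at h
        exact hcI (hI (⟨le_refl _, h⟩ : ((k', c) : Fin m × Fin n) ≤ (k', b)) hbrow)
      have hcp2 : c ≤ p.2 := Sc.min'_le p.2 (Finset.mem_filter.mpr ⟨Finset.mem_univ _, hptop⟩)
      have hplowc : ((p.1, c) : Fin m × Fin n) ∈ I :=
        hI (⟨le_refl _, hcp2⟩ : ((p.1, c) : Fin m × Fin n) ≤ p) hpI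
      refine ⟨(k', c), ?_, ?_⟩
      · refine Finset.mem_filter.mpr ⟨Finset.mem_univ _, ⟨?_, hbc⟩, hcI, ?_⟩
        · show a.val < k'.val
          have : a.val ≤ p.1.val := hpab.1
          simp only [hk'def]
          omega
        · intro y x hxy hy
          rcases hy with hy | hy
          · exact Set.mem_union_left _ (hI hxy hy)
          · -- y = (k', c)
            have hy' : y = ((k', c) : Fin m × Fin n) := hy
            subst hy'
            by_cases hx : x = ((k', c) : Fin m × Fin n)
            · exact Set.mem_union_right _ hx
            · left
              have hx1 : x.1.val ≤ k'.val := hxy.1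
              have hx2 : x.2 ≤ c := hxy.2
              by_cases hcase : x.1.val ≤ p.1.val
              · exact hI (⟨hcase, hx2⟩ : x ≤ ((p.1, c) : Fin m × Fin n)) hplowc
              · have hx1' : x.1 = k' := Fin.ext (by simp only [hk'def]; simp [hk'def] at hx1; omega)
                have hx2' : x.2 < c := by
                  rcases lt_or_eq_of_le hx2 with h | h
                  · exact h
                  · exact absurd (Prod.ext_iff.mpr ⟨hx1', h⟩) hx
                have := hcmin x.2 hx2'
                have hxeq : ((k', x.2) : Fin m × Fin n) = x := Prod.ext_iff.mpr ⟨hx1'.symm, rfl⟩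
                rwa [hxeq] at this
      · simp only [hk'def]
        omega
    · rintro ⟨d, hdDf, hdk⟩
      obtain ⟨-, ⟨had, hbd⟩, hdI, hdlow⟩ := Finset.mem_filter.mp hdDf
      have h1 : 1 ≤ d.1.val := by
        have : a.val < d.1.val := had
        omega
      have hrlt : d.1.val - 1 < m := by have := d.1.isLt; omega
      set r : Fin m := ⟨d.1.val - 1, hrlt⟩ with hrdef
      have hrd : r.val < d.1.val := by simp only [hrdef]; omega
      have hrc : ((r, d.2) : Fin m × Fin n) ∈ I := by
        have hmem : ((r, d.2) : Fin m × Fin n) ∈ I ∪ {d} :=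
          hdlow (⟨le_of_lt hrd, le_refl _⟩ : ((r, d.2) : Fin m × Fin n) ≤ d)
            (Set.mem_union_right _ rfl)
        rcases hmem with h | h
        · exact h
        · exfalso
          have : r.val = d.1.val := congrArg (fun z : Fin m × Fin n => z.1.val) h
          omega
      set S' := Finset.univ.filter (fun j : Fin n => ((r, j) : Fin m × Fin n) ∈ I) with hS'def
      have hS'ne : S'.Nonempty := ⟨d.2, Finset.mem_filter.mpr ⟨Finset.mem_univ _, hrc⟩⟩
      set j' := S'.max' hS'ne with hj'def
      have hj'I : ((r, j') : Fin m × Fin n) ∈ I :=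
        (Finset.mem_filter.mp (S'.max'_mem hS'ne)).2
      have hcj : d.2 ≤ j' := S'.le_max' d.2 (Finset.mem_filter.mpr ⟨Finset.mem_univ _, hrc⟩)
      refine ⟨(r, j'), Finset.mem_filter.mpr ⟨?_, ?_⟩, ?_⟩
      · refine Finset.mem_filter.mpr ⟨Finset.mem_univ _, ⟨?_, ?_⟩, hj'I, ?_⟩
        · show a.val ≤ r.val
          have : a.val < d.1.val := had
          simp only [hrdef]
          omega
        · exact le_trans (le_of_lt hbd) hcj
        · intro y hy hle
          by_cases hcase : y.1.val ≤ r.val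
          · have hy1 : y.1 = r := Fin.ext (le_antisymm hcase hle.1)
            have hymem : ((r, y.2) : Fin m × Fin n) ∈ I := by
              have heq : ((r, y.2) : Fin m × Fin n) = y := Prod.ext_iff.mpr ⟨hy1.symm, rfl⟩
              rwa [heq]
            have hy2 : y.2 ≤ j' := S'.le_max' y.2 (Finset.mem_filter.mpr
              ⟨Finset.mem_univ _, hymem⟩)
            exact Prod.ext_iff.mpr ⟨hy1.symm, le_antisymm hle.2 hy2⟩
          · exfalso
            have hdy : d ≤ y := by
              refine ⟨?_, le_trans hcj hle.2⟩
              show d.1.val ≤ y.1.val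
              simp only [hrdef] at hcase
              omega
            exact hdI (hI hdy hy)  -- wrong direction? hI hdy hy : d ∈ I from y ∈ I, d ≤ y
      · -- ¬ star (r, j')
        intro hstar
        have hdbI : ((d.1, b) : Fin m × Fin n) ∈ I := by
          have hmem : ((d.1, b) : Fin m × Fin n) ∈ I ∪ {d} :=
            hdlow (⟨le_refl _, le_of_lt hbd⟩ : ((d.1, b) : Fin m × Fin n) ≤ d)
              (Set.mem_union_right _ rfl)
          rcases hmem with h | h
          · exact h
          · exfalso
            have : b.val = d.2.val := congrArg (fun z : Fin m × Fin n => z.2.val) h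
            have : b.val < d.2.val := hbd
            omega
        exact hstar (d.1, b) hdbI hrd (le_refl b)
      · simp only [hrdef]
        omega
  -- put it together
  have hsplit := Finset.card_filter_add_card_filter_not (s := Mf) (p := star)
  have h1 : (Mf.filter star).card = 1 := by rw [hMs]; simp
  have h2 : (Mf.filter fun p => ¬ star p).card = Df.card := by
    rw [← Finset.card_image_of_injOn hginj, ← Finset.card_image_of_injOn hhinj, hImg]
  omega

set_option maxHeartbeats 1000000 in
theorem stmt_11 (m n : ℕ) (hm : 2 ≤ m) (hn : 2 ≤ n) (a : Fin m) (b : Fin n)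
    (I : Set (Fin m × Fin n)) (hI : IsLowerSet I) :
    (∑ p ∈ Finset.univ.filter (fun p : Fin m × Fin n => (a, b) ≤ p), tm I p)
      - (∑ p ∈ Finset.univ.filter (fun p : Fin m × Fin n => a < p.1 ∧ b < p.2), tp I p)
      = if (a, b) ∈ I then 1 else 0 := by
  classical
  by_cases hab : (a, b) ∈ I
  · rw [if_pos hab]
    have hs1 : (∑ p ∈ Finset.univ.filter (fun p : Fin m × Fin n => (a, b) ≤ p), tm I p)
        = (((Finset.univ.filter (fun p : Fin m × Fin n => (a, b) ≤ p)).filter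
            (fun p => p ∈ I ∧ ∀ y ∈ I, p ≤ y → p = y)).card : ℝ) :=
      sum_ind _ _ _ (fun x _ hx => if_pos hx) (fun x _ hx => if_neg hx)
    have hs2 : (∑ p ∈ Finset.univ.filter (fun p : Fin m × Fin n => a < p.1 ∧ b < p.2), tp I p)
        = (((Finset.univ.filter (fun p : Fin m × Fin n => a < p.1 ∧ b < p.2)).filter
            (fun p => p ∉ I ∧ IsLowerSet (I ∪ {p}))).card : ℝ) :=
      sum_ind _ _ _ (fun x _ hx => if_pos hx) (fun x _ hx => if_neg hx)
    rw [hs1, hs2, Finset.filter_filter, Finset.filter_filter]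
    have hc := core_card m n a b I hI hab
    rw [hc]
    push_cast
    ring
  · rw [if_neg hab]
    have h1 : ∀ p ∈ Finset.univ.filter (fun p : Fin m × Fin n => (a, b) ≤ p), tm I p = 0 := by
      intro p hp
      rw [Finset.mem_filter] at hp
      rw [tm, if_neg]
      rintro ⟨hpI, -⟩
      exact hab (hI hp.2 hpI)
    have h2 : ∀ p ∈ Finset.univ.filter
        (fun p : Fin m × Fin n => a < p.1 ∧ b < p.2), tp I p = 0 := by
      intro p hp
      rw [Finset.mem_filter] at hp
      rw [tp, if_neg]
      rintro ⟨hpI, hlow⟩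
      have hle : (a, b) ≤ p := ⟨le_of_lt hp.2.1, le_of_lt hp.2.2⟩
      have hmem : (a, b) ∈ I ∪ {p} := hlow hle (Set.mem_union_right _ rfl)
      rcases hmem with h | h
      · exact hab h
      · have : a = p.1 := congrArg Prod.fst h
        exact absurd hp.2.1 (by rw [← this]; exact lt_irrefl a)
    rw [Finset.sum_eq_zero h1, Finset.sum_eq_zero h2, sub_zero]
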